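/- Let m ≥ 2, n ≥ 1, and define x_crit = inf_{r ∈ (0,1]} χ(r) where χ(r) = (1 - (1 - r^{1/m})^{1/n}) / r. If x ∈ [0,1] satisfies x < x_crit, then the only fixed point of r ↦ (1 - (1 - x·r)^n)^m in [0,1] is r = 0. Moreover x_crit > 0. -/

import Mathlib

lemma chi_lower (m n : ℕ) (hm : 2 ≤ m) (hn : 1 ≤ n) :
    ∀ r ∈ Set.Ioc (0:ℝ) 1,
      (1:ℝ)/n ≤ (1 - (1 - r ^ ((1:ℝ) / (m:ℝ))) ^ ((1:ℝ) / (n:ℝ))) / r := by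
  intro r hr
  obtain ⟨hr0, hr1⟩ := hr
  have hm0 : (0:ℝ) < m := by positivity
  have hn0 : (0:ℝ) < n := by exact_mod_cast Nat.pos_of_ne_zero (by omega)
  set s := r ^ ((1:ℝ)/(m:ℝ)) with hs
  have hs0 : 0 < s := Real.rpow_pos_of_pos hr0 _
  have hs1 : s ≤ 1 := Real.rpow_le_one hr0.le hr1 (by positivity)
  have hrs : r ≤ s := by
    calc r = r ^ (1:ℝ) := (Real.rpow_one r).symm
    _ ≤ r ^ ((1:ℝ)/(m:ℝ)) := by
        apply Real.rpow_le_rpow_of_exponent_ge hr0 hr1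
        rw [div_le_one hm0]
        exact_mod_cast hm.trans' (by norm_num)
  have hsn : s / n ≤ 1 := by
    rw [div_le_one hn0]
    calc s ≤ 1 := hs1
    _ ≤ (n:ℝ) := by exact_mod_cast hn
  have hb : (1 - s) ≤ (1 - s/n)^n := by
    have h := one_add_mul_le_pow (a := -(s/(n:ℝ))) (by nlinarith) n
    have he : 1 + (n:ℝ) * -(s/n) = 1 - s := by field_simp; ring
    calc (1:ℝ) - s = 1 + (n:ℝ) * -(s/n) := he.symm
    _ ≤ (1 + -(s/n))^n := h
    _ = (1 - s/n)^n := by ring_nf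
  have h2 : (1 - s) ^ ((1:ℝ)/(n:ℝ)) ≤ 1 - s/n := by
    have h3 : (((1 - s/n)^n : ℝ)) ^ ((1:ℝ)/(n:ℝ)) = 1 - s/n := by
      rw [← Real.rpow_natCast (1 - s/n) n, ← Real.rpow_mul (by linarith),
        mul_one_div, div_self hn0.ne', Real.rpow_one]
    calc (1-s)^((1:ℝ)/(n:ℝ)) ≤ ((1-s/n)^n)^((1:ℝ)/(n:ℝ)) :=
        Real.rpow_le_rpow (by linarith) hb (by positivity)
    _ = 1 - s/n := h3
  have hnum : s/n ≤ 1 - (1 - s) ^ ((1:ℝ)/(n:ℝ)) := by linarith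
  calc (1:ℝ)/n = (s/n)/s := by field_simp
  _ ≤ (s/n)/r := by
      apply div_le_div_of_nonneg_left (by positivity) hr0 hrs
  _ ≤ (1 - (1 - s) ^ ((1:ℝ)/(n:ℝ)))/r := by gcongr

theorem stmt7 (m n : ℕ) (hm : 2 ≤ m) (hn : 1 ≤ n)
    (xcrit : ℝ)
    (hxc : xcrit = sInf ((fun r : ℝ =>
      (1 - (1 - r ^ ((1:ℝ) / (m:ℝ))) ^ ((1:ℝ) / (n:ℝ))) / r) '' Set.Ioc (0:ℝ) 1)) :
    (∀ x ∈ Set.Icc (0:ℝ) 1, x < xcrit →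
      ∀ r ∈ Set.Icc (0:ℝ) 1, r = (1 - (1 - x * r) ^ n) ^ m → r = 0) ∧
    0 < xcrit := by
  set S := ((fun r : ℝ =>
      (1 - (1 - r ^ ((1:ℝ) / (m:ℝ))) ^ ((1:ℝ) / (n:ℝ))) / r) '' Set.Ioc (0:ℝ) 1) with hS
  have hne : S.Nonempty := ⟨_, ⟨1, ⟨by norm_num, le_refl 1⟩, rfl⟩⟩
  have hn0 : (0:ℝ) < n := by exact_mod_cast Nat.pos_of_ne_zero (by omega)
  have hm0 : (0:ℝ) < m := by positivity
  have hbdd : ∀ y ∈ S, (1:ℝ)/n ≤ y := by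
    rintro y ⟨r, hr, rfl⟩
    exact chi_lower m n hm hn r hr
  have hxcl : (1:ℝ)/n ≤ xcrit := by
    rw [hxc]
    exact le_csInf hne hbdd
  refine ⟨?_, lt_of_lt_of_le (by positivity) hxcl⟩
  intro x hx hlt r hr hfix
  obtain ⟨hx0, hx1⟩ := hx
  obtain ⟨hr0, hr1⟩ := hr
  by_contra hr0'
  have hrpos : 0 < r := lt_of_le_of_ne hr0 (Ne.symm hr0')
  -- basic bounds
  have hxr0 : 0 ≤ x * r := mul_nonneg hx0 hr0
  have hxr1 : x * r ≤ 1 := mul_le_one₀ hx1 hr0 hr1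
  set b := 1 - x * r with hbdef
  have hb0 : 0 ≤ b := by simp [hbdef]; linarith
  have hb1 : b ≤ 1 := by simp [hbdef]; linarith
  set a := 1 - b ^ n with hadef
  have ha0 : 0 ≤ a := by
    have := pow_le_one₀ hb0 hb1 (n := n)
    simp [hadef]; linarith
  have ha1 : a ≤ 1 := by
    have := pow_nonneg hb0 n
    simp [hadef]; linarith
  have hra : r = a ^ m := hfix
  -- r^(1/m) = a
  have h1 : r ^ ((1:ℝ)/(m:ℝ)) = a := by
    rw [hra, ← Real.rpow_natCast a m, ← Real.rpow_mul ha0,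
      mul_one_div, div_self hm0.ne', Real.rpow_one]
  -- (1 - r^(1/m))^(1/n) = b
  have h2 : (1 - r ^ ((1:ℝ)/(m:ℝ))) ^ ((1:ℝ)/(n:ℝ)) = b := by
    rw [h1]
    have : (1:ℝ) - a = b ^ n := by simp [hadef]
    rw [this, ← Real.rpow_natCast b n, ← Real.rpow_mul hb0,
      mul_one_div, div_self hn0.ne', Real.rpow_one]
  have hval : (1 - (1 - r ^ ((1:ℝ)/(m:ℝ))) ^ ((1:ℝ)/(n:ℝ))) / r = x := by
    rw [h2]
    field_simp [hbdef]
    linear_combination -hbdef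
  have hmem : x ∈ S := ⟨r, ⟨hrpos, hr1⟩, hval⟩
  have : xcrit ≤ x := by
    rw [hxc]
    exact csInf_le ⟨(1:ℝ)/n, hbdd⟩ hmem
  linarith
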